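/- Let f : A^n → A be an n-ary product decomposition operation and g : A → A satisfy g^n = id and g(f(x_1,...,x_n)) = f(g(x_2),...,g(x_n),g(x_1)). Then for each i (indices mod n), g maps ν_i onto ν_{i−1}: (a,b) ∈ ν_i iff (g(a),g(b)) ∈ ν_{i−1}. -/

import Mathlib

/-- The relation `ν_i` associated with an `n`-ary product decomposition operation `f`. -/
def nu {A : Type} {n : ℕ} (f : (Fin n → A) → A) (i : Fin n) (a b : A) : Prop :=
  ∃ c : Fin n → A, f (Function.update c i a) = f (Function.update c i b)

open scoped Fin.NatCast Fin.CommRing in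
lemma shift_nu_fwd {A : Type} {n : ℕ} [NeZero n] (f : (Fin n → A) → A) (g : A → A)
    (hg2 : ∀ x : Fin n → A, g (f x) = f (fun k => g (x (k + 1)))) :
    ∀ (i : Fin n) (a b : A), nu f i a b → nu f (i - 1) (g a) (g b) := by
  intro i a b ⟨c, hc⟩
  refine ⟨fun k => g (c (k + 1)), ?_⟩
  have e : ∀ x : A, Function.update (fun k => g (c (k + 1))) (i - 1) (g x)
      = fun k => g ((Function.update c i x) (k + 1)) := by
    intro x
    funext k
    by_cases hk : k = i - 1
    · subst hk
      rw [Function.update_self, sub_add_cancel, Function.update_self]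
    · have hk' : k + 1 ≠ i := fun h => hk (by rw [← h]; ring)
      rw [Function.update_of_ne hk, Function.update_of_ne hk']
  rw [e a, e b, ← hg2, ← hg2, hc]

open scoped Fin.NatCast Fin.CommRing in
lemma shift_nu_iter {A : Type} {n : ℕ} [NeZero n] (f : (Fin n → A) → A) (g : A → A)
    (hg2 : ∀ x : Fin n → A, g (f x) = f (fun k => g (x (k + 1)))) :
    ∀ (m : ℕ) (i : Fin n) (a b : A), nu f i a b → nu f (i - (m : Fin n)) (g^[m] a) (g^[m] b) := by
  intro m
  induction m with
  | zero => intro i a b h; simpa using h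
  | succ m ih =>
    intro i a b h
    have := shift_nu_fwd f g hg2 _ _ _ (ih i a b h)
    have hidx : i - (m : Fin n) - 1 = i - ((m + 1 : ℕ) : Fin n) := by
      push_cast
      ring
    rw [hidx] at this
    simpa [Function.iterate_succ_apply'] using this

/-- A coordinate shift `g` maps `ν_i` onto `ν_{i-1}` (indices mod `n`). -/
theorem shift_nu
    (A : Type) (n : ℕ) [NeZero n] (f : (Fin n → A) → A) (g : A → A)
    (h1 : ∀ x : A, f (fun _ => x) = x)
    (h2 : ∀ x : Fin n → Fin n → A, f (fun i => f (x i)) = f (fun i => x i i))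
    (hg1 : ∀ x : A, g^[n] x = x)
    (hg2 : ∀ x : Fin n → A, g (f x) = f (fun k => g (x (k + 1)))) :
    ∀ (i : Fin n) (a b : A), nu f i a b ↔ nu f (i - 1) (g a) (g b) := by
  intro i a b
  constructor
  · exact shift_nu_fwd f g hg2 i a b
  · open scoped Fin.NatCast Fin.CommRing in
    intro h
    have := shift_nu_iter f g hg2 (n - 1) (i - 1) (g a) (g b) h
    have hga : g^[n - 1] (g a) = a := by
      rw [← Function.iterate_succ_apply, show Nat.succ (n - 1) = n by have := NeZero.ne n; omega]
      exact hg1 a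
    have hgb : g^[n - 1] (g b) = b := by
      rw [← Function.iterate_succ_apply, show Nat.succ (n - 1) = n by have := NeZero.ne n; omega]
      exact hg1 b
    have hidx : i - 1 - ((n - 1 : ℕ) : Fin n) = i := by
      have h0 : (1 : Fin n) + ((n - 1 : ℕ) : Fin n) = 0 := by
        have h : ((1 + (n - 1) : ℕ) : Fin n) = 0 := by
          rw [Nat.add_sub_cancel' (Nat.one_le_iff_ne_zero.mpr (NeZero.ne n)), Fin.natCast_self]
        rw [Nat.cast_add, Nat.cast_one] at h
        exact h
      rw [sub_sub, h0, sub_zero]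
    rwa [hga, hgb, hidx] at this
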